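/- arXiv:2304.04929 — 5 statements merged into one kernel-verified Lean document; each statement's English description precedes it below -/
import Mathlib

section
/- For every integer n ≥ 1, every tuple of entire functions f_0, …, f_n : ℂ → ℂ with no common zero, every ε > 0 and every N > 0, there exist polynomials p_0, p_1, …, p_n ∈ ℂ[z] such that: (i) for every z with |z| ≤ N, the vector (p_0(z),…,p_n(z)) is nonzero and d_FS((p_0(z),…,p_n(z)), (f_0(z),…,f_n(z))) < ε; and (ii) deg p_0 > deg p_j for every j ∈ {1,…,n}. -/
/-- The Hermitian norm of a vector in `ℂ^m`. -/
noncomputable def hermNorm {m : ℕ} (a : Fin m → ℂ) : ℝ :=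
  Real.sqrt (∑ i, ‖a i‖ ^ 2)

/-- The Fubini–Study (chordal) distance between two points of `ℂP^{m-1}` given by
nonzero homogeneous-coordinate vectors in `ℂ^m`. -/
noncomputable def dFS {m : ℕ} (a b : Fin m → ℂ) : ℝ :=
  Real.sqrt (∑ i, ∑ j, if i < j then ‖a i * b j - a j * b i‖ ^ 2 else 0)
    / (hermNorm a * hermNorm b)

lemma hermNorm_eq_norm {m : ℕ} (a : Fin m → ℂ) :
    hermNorm a = ‖(WithLp.equiv 2 (Fin m → ℂ)).symm a‖ := by
  rw [EuclideanSpace.norm_eq]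
  simp [hermNorm]

lemma hermNorm_sub_le {m : ℕ} (a b : Fin m → ℂ) :
    hermNorm b - hermNorm (fun i => a i - b i) ≤ hermNorm a := by
  rw [hermNorm_eq_norm, hermNorm_eq_norm, hermNorm_eq_norm]
  have h : (WithLp.equiv 2 (Fin m → ℂ)).symm (fun i => a i - b i)
      = (WithLp.equiv 2 (Fin m → ℂ)).symm a - (WithLp.equiv 2 (Fin m → ℂ)).symm b := rfl
  rw [h]
  have := norm_sub_norm_le ((WithLp.equiv 2 (Fin m → ℂ)).symm a)
    ((WithLp.equiv 2 (Fin m → ℂ)).symm b)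
  have h2 : ‖(WithLp.equiv 2 (Fin m → ℂ)).symm b - (WithLp.equiv 2 (Fin m → ℂ)).symm a‖
      = ‖(WithLp.equiv 2 (Fin m → ℂ)).symm a - (WithLp.equiv 2 (Fin m → ℂ)).symm b‖ :=
    norm_sub_rev _ _
  linarith [norm_sub_norm_le ((WithLp.equiv 2 (Fin m → ℂ)).symm b)
    ((WithLp.equiv 2 (Fin m → ℂ)).symm a), h2.symm.le]

lemma hermNorm_le {m : ℕ} (a : Fin m → ℂ) (δ : ℝ) (hδ : 0 ≤ δ)
    (h : ∀ i, ‖a i‖ ≤ δ) : hermNorm a ≤ Real.sqrt m * δ := by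
  have : hermNorm a ≤ Real.sqrt (∑ _i : Fin m, δ ^ 2) := by
    apply Real.sqrt_le_sqrt
    exact Finset.sum_le_sum fun i _ => pow_le_pow_left₀ (norm_nonneg _) (h i) 2
  calc hermNorm a ≤ Real.sqrt (∑ _i : Fin m, δ ^ 2) := this
    _ = Real.sqrt m * δ := by
        rw [Finset.sum_const, Finset.card_univ, Fintype.card_fin, nsmul_eq_mul,
          Real.sqrt_mul (by positivity), Real.sqrt_sq hδ]

lemma exists_ne_zero_of_hermNorm_pos {m : ℕ} (a : Fin m → ℂ) (h : 0 < hermNorm a) :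
    ∃ i, a i ≠ 0 := by
  by_contra hc
  push_neg at hc
  simp [hermNorm, hc] at h

lemma poly_approx (f : ℂ → ℂ) (hf : Differentiable ℂ f) (N δ : ℝ) (hδ : 0 < δ) :
    ∃ q : Polynomial ℂ, ∀ z : ℂ, ‖z‖ ≤ N → ‖q.eval z - f z‖ ≤ δ := by
  have hball := hf.hasFPowerSeriesOnBall 0 (R := 1) one_pos
  set p := cauchyPowerSeries f 0 1 with hp
  have htu := hball.tendstoUniformlyOn' (r' := ⟨|N| + 1, by positivity⟩)
    (by exact ENNReal.coe_lt_top)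
  rw [Metric.tendstoUniformlyOn_iff] at htu
  obtain ⟨m, hm⟩ := (htu δ hδ).exists
  refine ⟨∑ k ∈ Finset.range m, Polynomial.C (p.coeff k) * Polynomial.X ^ k, fun z hz => ?_⟩
  have hzmem : z ∈ Metric.ball (0 : ℂ) ((⟨|N| + 1, by positivity⟩ : NNReal) : ℝ) := by
    rw [mem_ball_zero_iff]
    have : ‖z‖ ≤ N := hz
    have : N ≤ |N| := le_abs_self N
    push_cast
    linarith [hz.trans (le_abs_self N)]
  have := hm z hzmem
  have heval : Polynomial.eval z (∑ k ∈ Finset.range m, Polynomial.C (p.coeff k) * Polynomial.X ^ k)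
      = p.partialSum m (z - 0) := by
    rw [sub_zero, FormalMultilinearSeries.partialSum, Polynomial.eval_finset_sum]
    refine Finset.sum_congr rfl fun k _ => ?_
    rw [FormalMultilinearSeries.apply_eq_pow_smul_coeff, smul_eq_mul]
    rw [Polynomial.eval_mul, Polynomial.eval_pow, Polynomial.eval_C, Polynomial.eval_X]
    ring
  rw [heval]
  rw [dist_comm, Complex.dist_eq] at this
  exact this.le

lemma dFS_le {m : ℕ} (a b : Fin m → ℂ) (δ B : ℝ) (hδ : 0 ≤ δ) (hB : 0 ≤ B)
    (hab : ∀ i, ‖a i - b i‖ ≤ δ) (hbB : ∀ i, ‖b i‖ ≤ B)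
    (ha : 0 < hermNorm a) (hb : 0 < hermNorm b) :
    dFS a b ≤ 2 * δ * B * m / (hermNorm a * hermNorm b) := by
  unfold dFS
  rw [div_le_div_iff_of_pos_right (by positivity : (0:ℝ) < hermNorm a * hermNorm b)]
  have hterm : ∀ i j : Fin m,
      (if i < j then ‖a i * b j - a j * b i‖ ^ 2 else 0) ≤ (2 * δ * B) ^ 2 := by
    intro i j
    split
    · have key : a i * b j - a j * b i = (a i - b i) * b j - (a j - b j) * b i := by ring
      have habs : ‖a i * b j - a j * b i‖ ≤ 2 * δ * B := by
        rw [key]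
        calc ‖(a i - b i) * b j - (a j - b j) * b i‖
            ≤ ‖(a i - b i) * b j‖ + ‖(a j - b j) * b i‖ := by
              simpa using
                norm_sub_le ((a i - b i) * b j) ((a j - b j) * b i)
          _ ≤ δ * B + δ * B := by
              rw [norm_mul, norm_mul]
              exact add_le_add
                (mul_le_mul (hab i) (hbB j) (norm_nonneg _) hδ)
                (mul_le_mul (hab j) (hbB i) (norm_nonneg _) hδ)
          _ = 2 * δ * B := by ring
      exact pow_le_pow_left₀ (norm_nonneg _) habs 2
    · positivity
  have hsum : (∑ i, ∑ j, if i < j then ‖a i * b j - a j * b i‖ ^ 2 else 0)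
      ≤ (2 * δ * B * m) ^ 2 := by
    calc (∑ i, ∑ j, if i < j then ‖a i * b j - a j * b i‖ ^ 2 else 0)
        ≤ ∑ _i : Fin m, ∑ _j : Fin m, (2 * δ * B) ^ 2 :=
          Finset.sum_le_sum fun i _ => Finset.sum_le_sum fun j _ => hterm i j
      _ = (2 * δ * B * m) ^ 2 := by
          simp [Finset.sum_const, Finset.card_univ]
          ring
  calc Real.sqrt (∑ i, ∑ j, if i < j then ‖a i * b j - a j * b i‖ ^ 2 else 0)
      ≤ Real.sqrt ((2 * δ * B * m) ^ 2) := Real.sqrt_le_sqrt hsum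
    _ = 2 * δ * B * m := Real.sqrt_sq (by positivity)


set_option maxHeartbeats 4000000 in
/-- Runge-type approximation for entire curves. Any entire curve
`[f₀ : ⋯ : fₙ] : ℂ → ℂP^n` can be approximated on `{|z| ≤ N}`, in the Fubini–Study
distance, by a rational curve `[p₀ : ⋯ : pₙ]` with `deg p₀ > deg p_j` for all `j ≠ 0`. -/
theorem stmt2 (n : ℕ) (hn : 1 ≤ n) (f : Fin (n + 1) → ℂ → ℂ)
    (hf : ∀ i, Differentiable ℂ (f i)) (hnc : ∀ z : ℂ, ∃ i, f i z ≠ 0)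
    (ε N : ℝ) (hε : 0 < ε) (hN : 0 < N) :
    ∃ p : Fin (n + 1) → Polynomial ℂ,
      (∀ z : ℂ, ‖z‖ ≤ N →
        (∃ i, (p i).eval z ≠ 0) ∧
        dFS (fun i => (p i).eval z) (fun i => f i z) < ε) ∧
      (∀ j : Fin (n + 1), j ≠ 0 → (p j).degree < (p 0).degree) := by
  classical
  set g : ℂ → ℝ := fun z => ∑ i, ‖f i z‖ ^ 2 with hg
  have hgc : Continuous g := by
    apply continuous_finset_sum
    exact fun i _ => (continuous_norm.comp (hf i).continuous).pow 2
  have hcpt : IsCompact (Metric.closedBall (0 : ℂ) N) := isCompact_closedBall _ _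
  have hne : (Metric.closedBall (0 : ℂ) N).Nonempty := ⟨0, by simp [hN.le]⟩
  obtain ⟨z₀, hz₀mem, hz₀'⟩ := hcpt.exists_isMinOn hne hgc.continuousOn
  obtain ⟨z₁, hz₁mem, hz₁'⟩ := hcpt.exists_isMaxOn hne hgc.continuousOn
  have hz₀ : ∀ y ∈ Metric.closedBall (0 : ℂ) N, g z₀ ≤ g y := fun y hy => hz₀' hy
  have hz₁ : ∀ y ∈ Metric.closedBall (0 : ℂ) N, g y ≤ g z₁ := fun y hy => hz₁' hy
  set c : ℝ := g z₀ with hcdef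
  have hc : 0 < c := by
    obtain ⟨i, hi⟩ := hnc z₀
    have hpos : 0 < ‖f i z₀‖ ^ 2 := pow_pos (norm_pos_iff.mpr hi) 2
    have : 0 < ∑ j, ‖f j z₀‖ ^ 2 :=
      Finset.sum_pos' (fun j _ => by positivity) ⟨i, Finset.mem_univ i, hpos⟩
    rw [hcdef, hg]
    exact this
  set B : ℝ := Real.sqrt (g z₁) with hBdef
  have hcC : c ≤ g z₁ := hz₁ z₀ hz₀mem
  have hB : 0 < B := Real.sqrt_pos.2 (lt_of_lt_of_le hc hcC)
  have hfB : ∀ z ∈ Metric.closedBall (0 : ℂ) N, ∀ i, ‖f i z‖ ≤ B := by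
    intro z hz i
    have h1 : ‖f i z‖ ^ 2 ≤ g z :=
      Finset.single_le_sum (f := fun j => ‖f j z‖ ^ 2)
        (fun j _ => by positivity) (Finset.mem_univ i)
    have h2 : ‖f i z‖ ^ 2 ≤ g z₁ := h1.trans (hz₁ z hz)
    calc ‖f i z‖ = Real.sqrt (‖f i z‖ ^ 2) :=
          (Real.sqrt_sq (norm_nonneg _)).symm
      _ ≤ B := Real.sqrt_le_sqrt h2
  set s : ℝ := Real.sqrt c with hsdef
  have hs : 0 < s := Real.sqrt_pos.2 hc
  have hss : s * s = c := Real.mul_self_sqrt hc.le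
  have hsqn : (0:ℝ) < Real.sqrt ((n:ℝ) + 1) := by positivity
  set δ : ℝ := min (s / (2 * Real.sqrt ((n:ℝ) + 1))) (ε * c / (4 * B * ((n:ℝ) + 1) + 1))
    with hδdef
  have h4B : (0:ℝ) < 4 * B * ((n:ℝ) + 1) + 1 := by nlinarith [hB, Nat.cast_nonneg (α := ℝ) n]
  have hδ : 0 < δ :=
    lt_min (div_pos hs (by positivity)) (div_pos (mul_pos hε hc) h4B)
  have hδ1 : δ ≤ s / (2 * Real.sqrt ((n:ℝ) + 1)) := min_le_left _ _
  have hδ2 : δ ≤ ε * c / (4 * B * ((n:ℝ) + 1) + 1) := min_le_right _ _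
  clear_value δ
  have hqi : ∀ i : Fin (n + 1), ∃ q : Polynomial ℂ,
      ∀ z : ℂ, ‖z‖ ≤ N → ‖q.eval z - f i z‖ ≤ δ / 2 :=
    fun i => poly_approx (f i) (hf i) N (δ / 2) (half_pos hδ)
  choose q hq using hqi
  set D : ℕ := (Finset.univ.sup fun i => (q i).natDegree) + 1 with hDdef
  have hDq : ∀ i, (q i).natDegree < D :=
    fun i => Nat.lt_succ_of_le (Finset.le_sup (f := fun i => (q i).natDegree) (Finset.mem_univ i))
  clear_value D
  set η : ℂ := Complex.ofReal ((δ / 2) / (N ^ D + 1)) with hηdef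
  have hNDpos : (0:ℝ) < N ^ D + 1 := by nlinarith [pow_pos hN D]
  have hηR : (0:ℝ) < (δ / 2) / (N ^ D + 1) := div_pos (half_pos hδ) hNDpos
  have hη : η ≠ 0 := by
    simp only [hηdef, ne_eq, Complex.ofReal_eq_zero]
    exact ne_of_gt hηR
  have hηabs : ‖η‖ = (δ / 2) / (N ^ D + 1) := by
    rw [hηdef, Complex.norm_real, Real.norm_eq_abs, abs_of_pos hηR]
  clear_value η
  set p : Fin (n + 1) → Polynomial ℂ :=
    Function.update q 0 (q 0 + Polynomial.C η * Polynomial.X ^ D) with hpdef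
  have hp0 : p 0 = q 0 + Polynomial.C η * Polynomial.X ^ D := Function.update_self _ _ _
  have hpj : ∀ j : Fin (n + 1), j ≠ 0 → p j = q j := fun j hj => Function.update_of_ne hj _ _
  clear_value p
  have hdeglt : ∀ i, (q i).degree < (D : WithBot ℕ) := by
    intro i
    exact lt_of_le_of_lt (Polynomial.degree_le_natDegree) (by exact_mod_cast hDq i)
  have hdeg0 : (p 0).degree = (D : WithBot ℕ) := by
    rw [hp0, Polynomial.degree_add_eq_right_of_degree_lt, Polynomial.degree_C_mul_X_pow _ hη]
    rw [Polynomial.degree_C_mul_X_pow _ hη]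
    exact hdeglt 0
  have happ : ∀ z : ℂ, ‖z‖ ≤ N → ∀ i, ‖(p i).eval z - f i z‖ ≤ δ := by
    intro z hz i
    by_cases hi : i = 0
    · subst hi
      rw [hp0]
      have h1 := hq 0 z hz
      have hzD : ‖z‖ ^ D ≤ N ^ D := pow_le_pow_left₀ (norm_nonneg _) hz D
      have hkey : ‖η * z ^ D‖ ≤ δ / 2 := by
        rw [norm_mul, norm_pow, hηabs]
        rw [div_mul_eq_mul_div, div_le_iff₀ hNDpos]
        have h5 : ‖z‖ ^ D ≤ N ^ D + 1 := by linarith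
        have h6 : (0:ℝ) ≤ δ / 2 := by linarith
        exact mul_le_mul_of_nonneg_left h5 h6
      have e1 : (q 0 + Polynomial.C η * Polynomial.X ^ D).eval z - f 0 z
          = ((q 0).eval z - f 0 z) + η * z ^ D := by
        rw [Polynomial.eval_add, Polynomial.eval_mul, Polynomial.eval_C,
          Polynomial.eval_pow, Polynomial.eval_X]
        ring
      rw [e1]
      have h2 := norm_add_le ((q 0).eval z - f 0 z) (η * z ^ D)
      linarith
    · rw [hpj i hi]
      exact (hq i z hz).trans (by linarith)
  refine ⟨p, fun z hz => ?_, fun j hj => ?_⟩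
  · have hzmem : z ∈ Metric.closedBall (0 : ℂ) N := by
      rw [Metric.mem_closedBall, Complex.dist_eq, sub_zero]
      exact hz
    set a : Fin (n + 1) → ℂ := fun i => (p i).eval z with hadef
    set b : Fin (n + 1) → ℂ := fun i => f i z with hbdef
    have hbB : ∀ i, ‖b i‖ ≤ B := fun i => hfB z hzmem i
    have hbnorm : s ≤ hermNorm b := Real.sqrt_le_sqrt (hz₀ z hzmem)
    have hd : ∀ i, ‖a i - b i‖ ≤ δ := fun i => happ z hz i
    have hdiffnorm : hermNorm (fun i => a i - b i) ≤ Real.sqrt ((n:ℝ) + 1) * δ := by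
      have := hermNorm_le (fun i => a i - b i) δ hδ.le hd
      calc hermNorm (fun i => a i - b i) ≤ Real.sqrt ((n + 1 : ℕ) : ℝ) * δ := this
        _ = Real.sqrt ((n:ℝ) + 1) * δ := by push_cast; ring_nf
    have hsd : Real.sqrt ((n:ℝ) + 1) * δ ≤ s / 2 := by
      rw [le_div_iff₀ (by positivity : (0:ℝ) < 2 * Real.sqrt ((n:ℝ) + 1))] at hδ1
      nlinarith
    have hanorm : s / 2 ≤ hermNorm a := by
      have := hermNorm_sub_le a b
      linarith
    have hapos : 0 < hermNorm a := lt_of_lt_of_le (half_pos hs) hanorm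
    have hbpos : 0 < hermNorm b := lt_of_lt_of_le hs hbnorm
    refine ⟨exists_ne_zero_of_hermNorm_pos a hapos, ?_⟩
    have hbound := dFS_le a b δ B hδ.le hB.le hd hbB hapos hbpos
    have hprod : c / 2 ≤ hermNorm a * hermNorm b := by
      calc c / 2 = (s / 2) * s := by rw [← hss]; ring
        _ ≤ hermNorm a * hermNorm b :=
          mul_le_mul hanorm hbnorm hs.le hapos.le
    have hcast : ((n + 1 : ℕ) : ℝ) = (n:ℝ) + 1 := by push_cast; ring
    have hbound2 : dFS a b ≤ 2 * δ * B * ((n:ℝ) + 1) / (c / 2) := by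
      calc dFS a b ≤ 2 * δ * B * ((n + 1 : ℕ) : ℝ) / (hermNorm a * hermNorm b) := hbound
        _ = 2 * δ * B * ((n:ℝ) + 1) / (hermNorm a * hermNorm b) := by rw [hcast]
        _ ≤ 2 * δ * B * ((n:ℝ) + 1) / (c / 2) :=
          div_le_div_of_nonneg_left
            (mul_nonneg (mul_nonneg (mul_nonneg (by norm_num) hδ.le) hB.le)
              (by positivity)) (half_pos hc) hprod
    have hfinal : 2 * δ * B * ((n:ℝ) + 1) / (c / 2) < ε := by
      rw [div_lt_iff₀ (half_pos hc)]
      rw [le_div_iff₀ h4B] at hδ2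
      nlinarith [hδ, hB, mul_pos (mul_pos hB hδ) hc, Nat.cast_nonneg (α := ℝ) n,
        mul_pos hδ (mul_pos hB (by positivity : (0:ℝ) < (n:ℝ) + 1))]
    exact lt_of_le_of_lt hbound2 hfinal
  · rw [hdeg0, hpj j hj]
    exact hdeglt j
end

section
/- Let (g_k)_{k≥1} be functions ℂ → ℂ, (R_k)_{k≥1} positive reals, and (a_k)_{k≥1} complex numbers. Assume: (i) for every k ≥ 1 and every z with |z| > R_k, |g_k(z)| ≤ 2^{−k}·R_k/|z|; and (ii) for every k ≥ 2, |a_k| − |a_{k−1}| − R_k − R_{k−1} > (R_1 + ⋯ + R_{k−1})·(k−1)·2^k. Then for every z ∈ ℂ satisfying |z − a_k| > R_k for all k ≥ 1, the series Σ_{k≥1} g_k(z − a_k) converges absolutely and |Σ_{k≥1} g_k(z − a_k)| < 1. -/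
/-- decay of each `g k` beyond radius `R k` plus separation of the centers
`a k` implies that, outside all the discs, the series `Σ g k (z - a k)` converges
absolutely and has modulus < 1. -/
theorem stmt7 (g : ℕ → ℂ → ℂ) (R : ℕ → ℝ) (a : ℕ → ℂ)
    (hR : ∀ k, 1 ≤ k → 0 < R k)
    (hdecay : ∀ k, 1 ≤ k → ∀ z : ℂ, R k < ‖z‖ →
      ‖g k z‖ ≤ (1 / 2) ^ k * R k / ‖z‖)
    (hsep : ∀ k : ℕ, 2 ≤ k →
      (∑ l ∈ Finset.Icc 1 (k - 1), R l) * ((k : ℝ) - 1) * 2 ^ k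
        < ‖a k‖ - ‖a (k - 1)‖ - R k - R (k - 1)) :
    ∀ z : ℂ, (∀ k, 1 ≤ k → R k < ‖z - a k‖) →
      Summable (fun k : ℕ => ‖g (k + 1) (z - a (k + 1))‖) ∧
      ‖∑' k : ℕ, g (k + 1) (z - a (k + 1))‖ < 1 := by
  intro z hz
  have hlt : ∀ k : ℕ, ‖g (k + 1) (z - a (k + 1))‖ < (1 / 2 : ℝ) ^ (k + 1) := by
    intro k
    have h1 : (1 : ℕ) ≤ k + 1 := Nat.le_add_left 1 k
    have hRk := hR (k + 1) h1
    have hzk := hz (k + 1) h1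
    have habs : 0 < ‖z - a (k + 1)‖ := lt_trans hRk hzk
    have hb := hdecay (k + 1) h1 (z - a (k + 1)) hzk
    have hlt2 : (1 / 2 : ℝ) ^ (k + 1) * R (k + 1) / ‖z - a (k + 1)‖
        < (1 / 2 : ℝ) ^ (k + 1) := by
      rw [div_lt_iff₀ habs]
      have : (0 : ℝ) < (1 / 2 : ℝ) ^ (k + 1) := by positivity
      nlinarith
    exact lt_of_le_of_lt hb hlt2
  have hgeo : Summable (fun k : ℕ => (1 / 2 : ℝ) ^ (k + 1)) := by
    apply Summable.comp_injective (summable_geometric_of_lt_one (by norm_num) (by norm_num))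
    exact fun a b => by omega
  have hsum : Summable (fun k : ℕ => ‖g (k + 1) (z - a (k + 1))‖) := by
    apply Summable.of_nonneg_of_le (fun k => norm_nonneg _)
      (fun k => (hlt k).le) hgeo
  refine ⟨hsum, ?_⟩
  have htsum1 : (∑' k : ℕ, (1 / 2 : ℝ) ^ (k + 1)) = 1 := by
    have : (fun k : ℕ => (1 / 2 : ℝ) ^ (k + 1)) = fun k : ℕ => (1 / 2) * (1 / 2 : ℝ) ^ k := by
      funext k; rw [pow_succ]; ring
    rw [this, tsum_mul_left, tsum_geometric_of_lt_one (by norm_num) (by norm_num)]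
    norm_num
  have h2 : (∑' k : ℕ, ‖g (k + 1) (z - a (k + 1))‖)
      < ∑' k : ℕ, (1 / 2 : ℝ) ^ (k + 1) :=
    Summable.tsum_lt_tsum (fun k => (hlt k).le) (hlt 0) hsum hgeo
  have h3 : ‖∑' k : ℕ, g (k + 1) (z - a (k + 1))‖
      ≤ ∑' k : ℕ, ‖g (k + 1) (z - a (k + 1))‖ := by
    simpa using
      norm_tsum_le_tsum_norm (f := fun k : ℕ => g (k + 1) (z - a (k + 1)))
        (by simpa using hsum)
  calc ‖∑' k : ℕ, g (k + 1) (z - a (k + 1))‖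
      ≤ _ := h3
    _ < ∑' k : ℕ, (1 / 2 : ℝ) ^ (k + 1) := h2
    _ = 1 := htsum1
end

section
/- Let (g_k)_{k≥1} be functions ℂ → ℂ, (R_k)_{k≥1} positive reals, and (a_k)_{k≥1} complex numbers. Assume: (i) for every k ≥ 1 and every z with |z| > R_k, |g_k(z)| ≤ 2^{−k}·R_k/|z|; and (ii) for every k ≥ 2, |a_k| − |a_{k−1}| − R_k − R_{k−1} > (R_1 + ⋯ + R_{k−1})·(k−1)·2^k. Then for every k ≥ 1 and every z in the closed disc {z : |z − a_k| ≤ R_k}, the series ε_k(z) := Σ_{ℓ≥1, ℓ≠k} g_ℓ(z − a_ℓ) converges absolutely and |ε_k(z)| < 2^{−k+1}. -/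
open Finset

/-- under the decay and separation hypotheses, on each closed disc
`{|z - a k| ≤ R k}` the error series `ε_k(z) = Σ_{ℓ≥1, ℓ≠k} g ℓ (z - a ℓ)` converges
absolutely and satisfies `|ε_k(z)| < 2^{-k+1}`. -/
theorem stmt8 (g : ℕ → ℂ → ℂ) (R : ℕ → ℝ) (a : ℕ → ℂ)
    (hR : ∀ k, 1 ≤ k → 0 < R k)
    (hdecay : ∀ k, 1 ≤ k → ∀ z : ℂ, R k < ‖z‖ →
      ‖g k z‖ ≤ (1 / 2) ^ k * R k / ‖z‖)
    (hsep : ∀ k : ℕ, 2 ≤ k →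
      (∑ l ∈ Finset.Icc 1 (k - 1), R l) * ((k : ℝ) - 1) * 2 ^ k
        < ‖a k‖ - ‖a (k - 1)‖ - R k - R (k - 1)) :
    ∀ k : ℕ, 1 ≤ k → ∀ z : ℂ, ‖z - a k‖ ≤ R k →
      Summable (fun l : {l : ℕ // 1 ≤ l ∧ l ≠ k} =>
        ‖g l (z - a l)‖) ∧
      ‖∑' l : {l : ℕ // 1 ≤ l ∧ l ≠ k}, g l (z - a l)‖
        < 2 * (1 / 2) ^ k := by
  intro k hk z hz
  set A : ℕ → ℝ := fun n => (∑ l ∈ Finset.Icc 1 (n - 1), R l) * ((n : ℝ) - 1) * 2 ^ n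
    with hAdef
  have hApos : ∀ n, 2 ≤ n → 0 < A n := by
    intro n hn
    have h1 : (0:ℝ) < ∑ l ∈ Finset.Icc 1 (n - 1), R l := by
      apply Finset.sum_pos
      · intro i hi
        exact hR i (Finset.mem_Icc.mp hi).1
      · exact ⟨1, Finset.mem_Icc.mpr ⟨le_refl 1, Nat.le_sub_one_of_lt hn⟩⟩
    have h2 : (0:ℝ) < (n : ℝ) - 1 := by
      have : (2:ℝ) ≤ (n:ℝ) := by exact_mod_cast hn
      linarith
    positivity
  -- key telescoping inequality
  have key : ∀ m n : ℕ, 1 ≤ m → m < n →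
      R m + R n + A n < ‖a n‖ - ‖a m‖ := by
    intro m n hm hmn
    induction n with
    | zero => omega
    | succ p ih =>
      have hp2 : 2 ≤ p + 1 := by omega
      have hs := hsep (p + 1) hp2
      simp only [Nat.add_sub_cancel] at hs
      push_cast at hs
      rcases Nat.lt_or_ge m p with hmp | hmp
      · have hkey := ih hmp
        have hAp : 0 < A p := hApos p (by omega)
        have hRp : 0 < R p := hR p (by omega)
        have : A (p+1) = (∑ l ∈ Finset.Icc 1 p, R l) * ((p:ℝ)) * 2 ^ (p+1) := by
          simp [hAdef]
        rw [this]
        linarith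
      · have hmeq : m = p := by omega
        subst hmeq
        have : A (m+1) = (∑ l ∈ Finset.Icc 1 m, R l) * ((m:ℝ)) * 2 ^ (m+1) := by
          simp [hAdef]
        rw [this]
        linarith
  -- distance lower bounds
  have habs : ∀ l : ℕ, ‖a l‖ - ‖a k‖ - R k ≤ ‖z - a l‖
      ∧ ‖a k‖ - ‖a l‖ - R k ≤ ‖z - a l‖ := by
    intro l
    have t1 : ‖a l - a k‖ ≤ ‖z - a l‖ + ‖z - a k‖ := by
      have := norm_sub_le_norm_sub_add_norm_sub (a l) z (a k)
      have h2 : ‖a l - z‖ = ‖z - a l‖ := norm_sub_rev _ _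
      linarith
    have t2 : ‖a l‖ - ‖a k‖ ≤ ‖a l - a k‖ := by
      have := norm_sub_le_norm_sub_add_norm_sub (a l) (a k) 0
      simp only [sub_zero] at this
      linarith [norm_nonneg (a l - a k)]
    have t3 : ‖a k‖ - ‖a l‖ ≤ ‖a l - a k‖ := by
      have h2 : ‖a l - a k‖ = ‖a k - a l‖ := norm_sub_rev _ _
      have := norm_sub_le_norm_sub_add_norm_sub (a k) (a l) 0
      simp only [sub_zero] at this
      linarith [norm_nonneg (a k - a l)]
    constructor <;> linarith
  have hdist : ∀ l : ℕ, 1 ≤ l → l ≠ k →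
      R l < ‖z - a l‖ ∧ (l < k → A k ≤ ‖z - a l‖) := by
    intro l hl hlk
    rcases Nat.lt_or_ge l k with hlt | hge
    · have hkey := key l k hl hlt
      have hAk : 0 < A k := hApos k (by omega)
      have hRl : 0 < R l := hR l hl
      have := (habs l).2
      exact ⟨by linarith, fun _ => by linarith⟩
    · have hkl : k < l := by omega
      have hkey := key k l hk hkl
      have hAl : 0 < A l := hApos l (by omega)
      have := (habs l).1
      exact ⟨by linarith, fun h => by omega⟩
  -- the majorant
  set b : ℕ → ℝ := fun l =>
    if l = 0 ∨ l = k then 0 else if l < k then (1/2) * R l / A k else (1/2)^l with hbdef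
  have hbnonneg : ∀ l, 0 ≤ b l := by
    intro l
    simp only [hbdef]
    split
    · exact le_refl 0
    · next h =>
      push_neg at h
      split
      · next hlk =>
        have h1 : 1 ≤ l := Nat.one_le_iff_ne_zero.mpr h.1
        have hAk : 0 < A k := hApos k (by omega)
        have := hR l h1
        positivity
      · positivity
  have hbsum : Summable b := by
    rw [← summable_nat_add_iff (k+1)]
    have : (fun n => b (n + (k+1))) = fun n => (1/2:ℝ)^n * (1/2)^(k+1) := by
      funext n
      simp only [hbdef]
      rw [if_neg (by omega), if_neg (by omega), ← pow_add]
    rw [this]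
    exact (summable_geometric_of_lt_one (by norm_num) (by norm_num)).mul_right _
  -- termwise bound
  have hfb : ∀ l : ℕ, 1 ≤ l → l ≠ k → ‖g l (z - a l)‖ ≤ b l := by
    intro l hl hlk
    obtain ⟨hd1, hd2⟩ := hdist l hl hlk
    have hRl : 0 < R l := hR l hl
    have hD : 0 < ‖z - a l‖ := lt_trans hRl hd1
    have hdec := hdecay l hl (z - a l) hd1
    simp only [hbdef]
    rw [if_neg (by omega)]
    rcases Nat.lt_or_ge l k with hlt | hge
    · rw [if_pos hlt]
      refine le_trans hdec ?_
      have hAk : 0 < A k := hApos k (by omega)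
      have hp : (1/2:ℝ)^l ≤ 1/2 := by
        calc (1/2:ℝ)^l ≤ (1/2:ℝ)^1 := by
              apply pow_le_pow_of_le_one (by norm_num) (by norm_num) hl
          _ = 1/2 := pow_one _
      gcongr
      exact hd2 hlt
    · rw [if_neg (by omega)]
      refine le_trans hdec ?_
      rw [mul_div_assoc]
      have h1 : R l / ‖z - a l‖ ≤ 1 := by
        rw [div_le_one hD]; exact le_of_lt hd1
      calc (1/2:ℝ)^l * (R l / ‖z - a l‖) ≤ (1/2:ℝ)^l * 1 := by
            apply mul_le_mul_of_nonneg_left h1 (by positivity)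
        _ = (1/2:ℝ)^l := mul_one _
  -- summability
  have hbsub : Summable (b ∘ (Subtype.val : {l : ℕ // 1 ≤ l ∧ l ≠ k} → ℕ)) :=
    hbsum.comp_injective Subtype.val_injective
  have hsf : Summable (fun l : {l : ℕ // 1 ≤ l ∧ l ≠ k} =>
      ‖g l (z - a l)‖) := by
    exact Summable.of_nonneg_of_le (fun l => norm_nonneg _)
      (fun l => hfb l.1 l.2.1 l.2.2) hbsub
  refine ⟨hsf, ?_⟩
  -- tsum bounds
  have h1 : ‖∑' l : {l : ℕ // 1 ≤ l ∧ l ≠ k}, g l (z - a l)‖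
      ≤ ∑' l : {l : ℕ // 1 ≤ l ∧ l ≠ k}, ‖g l (z - a l)‖ := by
    have := norm_tsum_le_tsum_norm (f := fun l : {l : ℕ // 1 ≤ l ∧ l ≠ k} => g l (z - a l))
      (by simpa using hsf)
    simpa using this
  have h2 : ∑' l : {l : ℕ // 1 ≤ l ∧ l ≠ k}, ‖g l (z - a l)‖
      ≤ ∑' l : {l : ℕ // 1 ≤ l ∧ l ≠ k}, b l :=
    Summable.tsum_le_tsum (fun l => hfb l l.2.1 l.2.2) hsf hbsub
  have h3 : ∑' l : {l : ℕ // 1 ≤ l ∧ l ≠ k}, b l ≤ ∑' l : ℕ, b l :=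
    tsum_comp_le_tsum_of_inj hbsum hbnonneg Subtype.val_injective
  have h4 : ∑' l : ℕ, b l = (∑ i ∈ Finset.range (k+1), b i) + (1/2:ℝ)^k := by
    have hsplit := Summable.sum_add_tsum_nat_add (f := b) (k+1) hbsum
    rw [← hsplit]
    congr 1
    have : (fun n => b (n + (k+1))) = fun n => (1/2:ℝ)^n * (1/2)^(k+1) := by
      funext n
      simp only [hbdef]
      rw [if_neg (by omega), if_neg (by omega), ← pow_add]
    rw [this, tsum_mul_right, tsum_geometric_of_lt_one (by norm_num) (by norm_num)]
    norm_num
    rw [pow_succ]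
    ring
  have h5 : (∑ i ∈ Finset.range (k+1), b i) ≤ (1/2:ℝ)^(k+1) := by
    rcases Nat.eq_or_lt_of_le hk with hk1 | hk2
    · subst hk1
      simp only [hbdef]
      norm_num [Finset.sum_range_succ]
    · have hk2 : 2 ≤ k := hk2
      have hsum : (∑ i ∈ Finset.range (k+1), b i)
          = ∑ i ∈ Finset.Icc 1 (k-1), (1/2) * R i / A k := by
        rw [← Finset.sum_subset (s₁ := Finset.Icc 1 (k-1)) (by
          intro x hx
          simp only [Finset.mem_Icc, Finset.mem_range] at hx ⊢
          omega)]
        · apply Finset.sum_congr rfl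
          intro i hi
          simp only [Finset.mem_Icc] at hi
          simp only [hbdef]
          rw [if_neg (by omega), if_pos (by omega)]
        · intro x hx hnx
          simp only [Finset.mem_Icc, Finset.mem_range] at hx hnx
          simp only [hbdef]
          rw [if_pos (by omega)]
      rw [hsum]
      have heq : ∀ i ∈ Finset.Icc 1 (k-1), (1/2) * R i / A k = R i * (1/2 / A k) := by
        intro i _; ring
      rw [Finset.sum_congr rfl heq, ← Finset.sum_mul]
      set S : ℝ := ∑ l ∈ Finset.Icc 1 (k-1), R l with hS
      have hSpos : 0 < S := by
        apply Finset.sum_pos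
        · intro i hi; exact hR i (Finset.mem_Icc.mp hi).1
        · exact ⟨1, Finset.mem_Icc.mpr ⟨le_refl 1, Nat.le_sub_one_of_lt hk2⟩⟩
      have hAk : A k = S * ((k:ℝ) - 1) * 2^k := rfl
      have hc : (1:ℝ) ≤ (k:ℝ) - 1 := by
        have : (2:ℝ) ≤ (k:ℝ) := by exact_mod_cast hk2
        linarith
      have hP : (0:ℝ) < 2^k := by positivity
      rw [hAk]
      have hhalf : (1/2:ℝ)^(k+1) = 1 / (2 * 2^k) := by
        rw [div_pow, one_pow, pow_succ]
        ring
      rw [hhalf]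
      have hSne : S ≠ 0 := ne_of_gt hSpos
      have hcne : ((k:ℝ)-1) ≠ 0 := by linarith
      have heq2 : S * (1/2 / (S*((k:ℝ)-1)*2^k)) = 1/(2*(((k:ℝ)-1)*2^k)) := by
        field_simp
      rw [heq2]
      apply one_div_le_one_div_of_le (by positivity)
      nlinarith
  have hfin : (1/2:ℝ)^(k+1) < (1/2:ℝ)^k := by
    rw [pow_succ]
    have : (0:ℝ) < (1/2:ℝ)^k := by positivity
    linarith
  linarith
end

section
/- Let (R_k)_{k≥1} be positive reals and (a_k)_{k≥1} complex numbers such that for every k ≥ 2, |a_k| − |a_{k−1}| − R_k − R_{k−1} > (R_1 + ⋯ + R_{k−1})·(k−1)·2^k. Then for all integers 1 ≤ ℓ < k and every z in the closed disc {z : |z − a_k| ≤ R_k}, one has |z − a_ℓ| > R_ℓ·(1 + (k−1)·2^k). Consequently, if moreover g_ℓ : ℂ → ℂ satisfies |g_ℓ(w)| ≤ 2^{−ℓ}·R_ℓ/|w| for all |w| > R_ℓ, then |g_ℓ(z − a_ℓ)| < 2^{−k}/(k−1) for all such z. -/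
/-- the disc-separation estimate. If the centers satisfy the growth
condition, then every point of the closed disc `{|z - a k| ≤ R k}` is at distance
greater than `R ℓ·(1 + (k-1)·2^k)` from `a ℓ` for all `1 ≤ ℓ < k`; consequently if
`g ℓ` decays beyond radius `R ℓ`, then `|g ℓ (z - a ℓ)| < 2^{-k}/(k-1)` there. -/
theorem stmt9 (R : ℕ → ℝ) (a : ℕ → ℂ)
    (hR : ∀ k, 1 ≤ k → 0 < R k)
    (hsep : ∀ k : ℕ, 2 ≤ k →
      (∑ l ∈ Finset.Icc 1 (k - 1), R l) * ((k : ℝ) - 1) * 2 ^ k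
        < ‖a k‖ - ‖a (k - 1)‖ - R k - R (k - 1)) :
    ∀ l k : ℕ, 1 ≤ l → l < k → ∀ z : ℂ, ‖z - a k‖ ≤ R k →
      R l * (1 + ((k : ℝ) - 1) * 2 ^ k) < ‖z - a l‖ ∧
      ∀ g : ℂ → ℂ,
        (∀ w : ℂ, R l < ‖w‖ →
          ‖g w‖ ≤ (1 / 2) ^ l * R l / ‖w‖) →
        ‖g (z - a l)‖ < (1 / 2) ^ k / ((k : ℝ) - 1) := by
  -- strengthened monotonicity of |a ·|
  have mono2 : ∀ l m : ℕ, 1 ≤ l → l < m →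
      ‖a l‖ + R l + R m ≤ ‖a m‖ := by
    intro l m hl hlm
    induction m, hlm using Nat.le_induction with
    | base =>
        have h := hsep (l + 1) (by omega)
        simp only [Nat.add_sub_cancel] at h
        have hS : 0 ≤ (∑ j ∈ Finset.Icc 1 l, R j) * (((l + 1 : ℕ) : ℝ) - 1) * 2 ^ (l + 1) := by
          apply mul_nonneg (mul_nonneg ?_ ?_) (by positivity)
          · exact Finset.sum_nonneg fun j hj => (hR j (Finset.mem_Icc.mp hj).1).le
          · push_cast; linarith [show (0:ℝ) ≤ (l:ℝ) from Nat.cast_nonneg l]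
        linarith
    | succ m hm ih =>
        have h := hsep (m + 1) (by omega)
        simp only [Nat.add_sub_cancel] at h
        have hS : 0 ≤ (∑ j ∈ Finset.Icc 1 m, R j) *
            (((m + 1 : ℕ) : ℝ) - 1) * 2 ^ (m + 1) := by
          apply mul_nonneg (mul_nonneg ?_ ?_) (by positivity)
          · exact Finset.sum_nonneg fun j hj => (hR j (Finset.mem_Icc.mp hj).1).le
          · push_cast; linarith [show (0:ℝ) ≤ (m:ℝ) from Nat.cast_nonneg m]
        have hRm : 0 < R m := hR m (by omega)
        have hRm1 : 0 < R (m + 1) := hR (m + 1) (by omega)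
        linarith [ih]
  intro l k hl hlk z hz
  obtain ⟨m, rfl⟩ : ∃ m, k = m + 1 := ⟨k - 1, by omega⟩
  have hm1 : 1 ≤ m := by omega
  have hRl : 0 < R l := hR l hl
  have hRm : 0 < R m := hR m hm1
  have hsepk := hsep (m + 1) (by omega)
  simp only [Nat.add_sub_cancel] at hsepk
  have hc : (1 : ℝ) ≤ ((m + 1 : ℕ) : ℝ) - 1 := by
    push_cast
    have : (1 : ℝ) ≤ (m : ℝ) := by exact_mod_cast hm1
    linarith
  have hp : (1 : ℝ) ≤ (2 : ℝ) ^ (m + 1) := one_le_pow₀ (by norm_num)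
  -- |a m| ≥ |a l| + R l - R m
  have hmono : ‖a l‖ + R l - R m ≤ ‖a m‖ := by
    rcases eq_or_lt_of_le (show l ≤ m by omega) with h | h
    · subst h; linarith
    · linarith [mono2 l m hl h]
  -- sum dominates R l
  have hS_ge : R l ≤ ∑ j ∈ Finset.Icc 1 m, R j :=
    Finset.single_le_sum (fun j hj => (hR j (Finset.mem_Icc.mp hj).1).le)
      (Finset.mem_Icc.mpr ⟨hl, by omega⟩)
  have hmul : R l * (((m + 1 : ℕ) : ℝ) - 1) * 2 ^ (m + 1) ≤
      (∑ j ∈ Finset.Icc 1 m, R j) * (((m + 1 : ℕ) : ℝ) - 1) * 2 ^ (m + 1) := by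
    apply mul_le_mul_of_nonneg_right (mul_le_mul_of_nonneg_right hS_ge (by linarith))
      (by positivity)
  -- triangle inequality
  have htri : ‖a (m + 1)‖ - ‖a l‖ - R (m + 1) ≤
      ‖z - a l‖ := by
    have h1 : ‖a (m + 1)‖ - ‖a l‖ ≤
        ‖a (m + 1) - a l‖ :=
      norm_sub_norm_le _ _
    have h2 : ‖a (m + 1) - a l‖ ≤
        ‖a (m + 1) - z‖ + ‖z - a l‖ :=
      norm_sub_le_norm_sub_add_norm_sub _ _ _
    have h3 : ‖a (m + 1) - z‖ = ‖z - a (m + 1)‖ :=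
      norm_sub_rev _ _
    linarith [h2, h3 ▸ h2]
  have part1 : R l * (1 + (((m + 1 : ℕ) : ℝ) - 1) * 2 ^ (m + 1)) <
      ‖z - a l‖ := by
    have hexp : R l * (1 + (((m + 1 : ℕ) : ℝ) - 1) * 2 ^ (m + 1)) =
        R l * (((m + 1 : ℕ) : ℝ) - 1) * 2 ^ (m + 1) + R l := by ring
    rw [hexp]
    linarith
  refine ⟨part1, ?_⟩
  intro g hg
  set A : ℝ := ‖z - a l‖ with hA
  have hApos : 0 < A := by
    have : 0 < R l * (1 + (((m + 1 : ℕ) : ℝ) - 1) * 2 ^ (m + 1)) := by positivity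
    linarith
  have hRlA : R l < A := by
    have hx : R l * (1 + (((m + 1 : ℕ) : ℝ) - 1) * 2 ^ (m + 1)) =
        R l + R l * ((((m + 1 : ℕ) : ℝ) - 1) * 2 ^ (m + 1)) := by ring
    have hy : 0 < R l * ((((m + 1 : ℕ) : ℝ) - 1) * 2 ^ (m + 1)) :=
      mul_pos hRl (mul_pos (by linarith) (by positivity))
    linarith
  have hgb := hg _ hRlA
  have hhalf : ((1 : ℝ) / 2) ^ l ≤ 1 / 2 := by
    calc ((1 : ℝ) / 2) ^ l ≤ (1 / 2) ^ 1 :=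
          pow_le_pow_of_le_one (by norm_num) (by norm_num) hl
      _ = 1 / 2 := pow_one _
  have hq : ((1 : ℝ) / 2) ^ (m + 1) * 2 ^ (m + 1) = 1 := by
    rw [div_pow, one_pow, div_mul_cancel₀]
    positivity
  have hfinal : ((1 : ℝ) / 2) ^ l * R l / A <
      (1 / 2) ^ (m + 1) / (((m + 1 : ℕ) : ℝ) - 1) := by
    rw [div_lt_div_iff₀ hApos (by linarith)]
    have hqpos : (0 : ℝ) < (1 / 2) ^ (m + 1) := by positivity
    nlinarith [part1, mul_le_mul_of_nonneg_right hhalf (le_of_lt (mul_pos hRl (by linarith : (0:ℝ) < ((m + 1 : ℕ) : ℝ) - 1))),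
      mul_lt_mul_of_pos_left part1 hqpos]
  exact lt_of_le_of_lt hgb hfinal
end

section
/- Let (g_k)_{k≥1} be functions ℂ → ℂ, (R_k)_{k≥1} positive reals, and (a_k)_{k≥1} complex numbers. Assume: (i) for every k ≥ 1, g_k is holomorphic (complex differentiable) at every point z with |z| > R_k and satisfies |g_k(z)| ≤ 2^{−k}·R_k/|z| there; and (ii) for every k ≥ 2, |a_k| − |a_{k−1}| − R_k − R_{k−1} > (R_1 + ⋯ + R_{k−1})·(k−1)·2^k. Then the set Ω := ℂ \ ⋃_{k≥1} {z : |z − a_k| ≤ R_k} is open, and the function H(z) := Σ_{k≥1} g_k(z − a_k) (the series converging absolutely and locally uniformly on Ω) is holomorphic at every point of Ω. -/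
open Filter in
/-- if each `g k` is holomorphic and decaying outside the disc of radius
`R k` and the centers `a k` are separated, then the complement `Ω` of the union of the
closed discs `{|z - a k| ≤ R k}` is open, the series `H(z) = Σ_{k≥1} g_k(z - a_k)`
converges absolutely and locally uniformly on `Ω`, and `H` is holomorphic on `Ω`. -/
theorem stmt10 (g : ℕ → ℂ → ℂ) (R : ℕ → ℝ) (a : ℕ → ℂ)
    (hR : ∀ k, 1 ≤ k → 0 < R k)
    (hdecay : ∀ k, 1 ≤ k → ∀ z : ℂ, R k < ‖z‖ →
      DifferentiableAt ℂ (g k) z ∧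
        ‖g k z‖ ≤ (1 / 2) ^ k * R k / ‖z‖)
    (hsep : ∀ k : ℕ, 2 ≤ k →
      (∑ l ∈ Finset.Icc 1 (k - 1), R l) * ((k : ℝ) - 1) * 2 ^ k
        < ‖a k‖ - ‖a (k - 1)‖ - R k - R (k - 1)) :
    letI Ω : Set ℂ := {z : ℂ | ∀ k, 1 ≤ k → R k < ‖z - a k‖}
    letI H : ℂ → ℂ := fun z => ∑' k : ℕ, g (k + 1) (z - a (k + 1))
    IsOpen Ω ∧
    (∀ z ∈ Ω, Summable (fun k : ℕ => ‖g (k + 1) (z - a (k + 1))‖)) ∧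
    TendstoLocallyUniformlyOn
      (fun N : ℕ => fun z : ℂ => ∑ k ∈ Finset.range N, g (k + 1) (z - a (k + 1)))
      H atTop Ω ∧
    ∀ z ∈ Ω, DifferentiableAt ℂ H z := by
  set Ω : Set ℂ := {z : ℂ | ∀ k, 1 ≤ k → R k < ‖z - a k‖} with hΩ
  set H : ℂ → ℂ := fun z => ∑' k : ℕ, g (k + 1) (z - a (k + 1)) with hH
  -- Step 1: growth of |a k| - R k
  have hb : ∀ k, 1 ≤ k →
      ‖a k‖ - R k + 4 * R 1 ≤ ‖a (k + 1)‖ - R (k + 1) := by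
    intro k hk
    have h := hsep (k + 1) (by omega)
    simp only [Nat.add_sub_cancel] at h
    have hS : R 1 ≤ ∑ l ∈ Finset.Icc 1 k, R l :=
      Finset.single_le_sum (f := R) (fun i hi => (hR i (Finset.mem_Icc.mp hi).1).le)
        (Finset.mem_Icc.mpr ⟨le_refl 1, hk⟩)
    have hS0 : (0:ℝ) ≤ ∑ l ∈ Finset.Icc 1 k, R l := le_trans (hR 1 le_rfl).le hS
    have hk1 : (1:ℝ) ≤ (k:ℝ) := by exact_mod_cast hk
    have h4 : (4:ℝ) ≤ 2 ^ (k + 1) := by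
      calc (4:ℝ) = 2 ^ 2 := by norm_num
      _ ≤ 2 ^ (k + 1) := pow_le_pow_right₀ one_le_two (by omega)
    have hkey : R 1 * 1 * 4 ≤ (∑ l ∈ Finset.Icc 1 k, R l) * (k:ℝ) * 2 ^ (k + 1) := by
      gcongr
    have hcast : ((k:ℝ) + 1 - 1) = (k:ℝ) := by ring
    have hRk : 0 < R k := hR k hk
    push_cast at h
    rw [hcast] at h
    linarith
  have hlin : ∀ k : ℕ, 1 ≤ k →
      ‖a 1‖ - R 1 + 4 * R 1 * ((k:ℝ) - 1) ≤ ‖a k‖ - R k := by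
    intro k hk
    induction k, hk using Nat.le_induction with
    | base => simp
    | succ n hn ih =>
      have := hb n hn
      push_cast
      push_cast at ih
      linarith
  have htop : Tendsto (fun k : ℕ => ‖a k‖ - R k) atTop atTop := by
    have hR1 : (0:ℝ) < 4 * R 1 := by have := hR 1 le_rfl; linarith
    have h1 : Tendsto (fun k : ℕ => (k:ℝ) - 1) atTop atTop :=
      tendsto_atTop_add_const_right _ (-1) tendsto_natCast_atTop_atTop
    have h2 : Tendsto (fun k : ℕ => ‖a 1‖ - R 1 + 4 * R 1 * ((k:ℝ) - 1))
        atTop atTop :=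
      tendsto_atTop_add_const_left _ _ (h1.const_mul_atTop hR1)
    exact tendsto_atTop_mono' _ (eventually_atTop.mpr ⟨1, hlin⟩) h2
  -- Step 2: Ω is open
  have hopen : IsOpen Ω := by
    rw [Metric.isOpen_iff]
    intro z hz
    obtain ⟨N, hN⟩ := eventually_atTop.mp
      (htop.eventually_gt_atTop (‖z‖ + 1))
    have hSne : (Finset.Icc 1 (N + 1)).Nonempty :=
      ⟨1, Finset.mem_Icc.mpr ⟨le_refl 1, by omega⟩⟩
    set δ : ℝ := min 1 ((Finset.Icc 1 (N + 1)).inf' hSne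
      fun k => ‖z - a k‖ - R k) with hδdef
    have hδpos : 0 < δ := by
      refine lt_min one_pos ?_
      rw [Finset.lt_inf'_iff]
      intro k hk
      exact sub_pos.mpr (hz k (Finset.mem_Icc.mp hk).1)
    refine ⟨δ, hδpos, ?_⟩
    intro w hw
    have hwz : ‖w - z‖ < δ := by
      rw [Metric.mem_ball, Complex.dist_eq] at hw; exact hw
    intro k hk
    by_cases hkN : k ≤ N + 1
    · have h1 : δ ≤ ‖z - a k‖ - R k :=
        le_trans (min_le_right _ _)
          (Finset.inf'_le _ (Finset.mem_Icc.mpr ⟨hk, hkN⟩))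
      have htri : ‖z - a k‖ ≤ ‖z - w‖ + ‖w - a k‖ := by
        simpa using norm_add_le (z - w) (w - a k)
      have : ‖z - w‖ = ‖w - z‖ := by
        exact norm_sub_rev z w
      linarith
    · have hkN' : N ≤ k := by omega
      have h2 := hN k hkN'
      have hδ1 : δ ≤ 1 := min_le_left _ _
      have hw' : ‖w‖ ≤ ‖z‖ + ‖w - z‖ := by
        simpa using norm_add_le z (w - z)
      have h3 : ‖a k‖ - ‖w‖ ≤ ‖w - a k‖ := by
        have h := norm_sub_norm_le (a k) w
        rwa [norm_sub_rev] at h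
      linarith
  -- Step 3: the uniform bound
  have hbound : ∀ z ∈ Ω, ∀ k : ℕ,
      ‖g (k + 1) (z - a (k + 1))‖ ≤ (1/2 : ℝ) ^ (k + 1) := by
    intro z hz k
    have hzk : R (k + 1) < ‖z - a (k + 1)‖ := hz (k + 1) (by omega)
    have hRk : 0 < R (k + 1) := hR (k + 1) (by omega)
    have hD : 0 < ‖z - a (k + 1)‖ := lt_trans hRk hzk
    have h := (hdecay (k + 1) (by omega) (z - a (k + 1)) hzk).2
    have hq : R (k + 1) / ‖z - a (k + 1)‖ ≤ 1 :=
      (div_le_one hD).mpr hzk.le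
    calc ‖g (k + 1) (z - a (k + 1))‖
        ≤ (1/2 : ℝ) ^ (k + 1) * R (k + 1) / ‖z - a (k + 1)‖ := h
      _ = (1/2 : ℝ) ^ (k + 1) * (R (k + 1) / ‖z - a (k + 1)‖) := by ring
      _ ≤ (1/2 : ℝ) ^ (k + 1) * 1 := by
          exact mul_le_mul_of_nonneg_left hq (by positivity)
      _ = (1/2 : ℝ) ^ (k + 1) := mul_one _
  have hgeo : Summable (fun k : ℕ => (1/2 : ℝ) ^ (k + 1)) := by
    have := summable_geometric_two.mul_left (1/2 : ℝ)
    refine this.congr fun k => ?_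
    rw [pow_succ]; ring
  -- Step 4: summability
  have hsummable : ∀ z ∈ Ω,
      Summable (fun k : ℕ => ‖g (k + 1) (z - a (k + 1))‖) := by
    intro z hz
    exact Summable.of_nonneg_of_le (fun k => norm_nonneg _)
      (fun k => hbound z hz k) hgeo
  -- Step 5: uniform convergence
  have hTU : TendstoUniformlyOn
      (fun N : ℕ => fun z : ℂ => ∑ k ∈ Finset.range N, g (k + 1) (z - a (k + 1)))
      H atTop Ω := by
    refine tendstoUniformlyOn_tsum_nat hgeo ?_
    intro k z hz
    exact hbound z hz k
  have hTLU : TendstoLocallyUniformlyOn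
      (fun N : ℕ => fun z : ℂ => ∑ k ∈ Finset.range N, g (k + 1) (z - a (k + 1)))
      H atTop Ω := hTU.tendstoLocallyUniformlyOn
  -- Step 6: holomorphy
  have hDOn : ∀ N : ℕ, DifferentiableOn ℂ
      (fun z : ℂ => ∑ k ∈ Finset.range N, g (k + 1) (z - a (k + 1))) Ω := by
    intro N z hz
    refine DifferentiableAt.differentiableWithinAt ?_
    refine DifferentiableAt.fun_sum fun k _ => ?_
    have hzk : R (k + 1) < ‖z - a (k + 1)‖ := hz (k + 1) (by omega)
    have hd := (hdecay (k + 1) (by omega) (z - a (k + 1)) hzk).1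
    exact hd.comp z ((differentiable_id.sub_const _) z)
  have hHdiff : DifferentiableOn ℂ H Ω :=
    hTLU.differentiableOn (Eventually.of_forall hDOn) hopen
  exact ⟨hopen, hsummable, hTLU, fun z hz =>
    hHdiff.differentiableAt (hopen.mem_nhds hz)⟩
end
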